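/- Let T be a Banach limit on ℓ^∞. Then there is no bounded linear operator T_Y : ℓ^∞(ℓ¹) → ℓ¹ satisfying ⟨y*, T_Y f⟩ = T(⟨y*, f⟩) for all f ∈ ℓ^∞(ℓ¹) and y* ∈ ℓ^∞ = (ℓ¹)*. -/

import Mathlib

open Filter Topology

/-- A Banach limit: a bounded linear functional on `ℓ^∞` that extends the limit on
convergent sequences, is positive, and is shift-invariant. -/
def IsBanachLimit (Λ : lp (fun _ : ℕ => ℝ) ⊤ →L[ℝ] ℝ) : Prop :=
  (∀ (x : lp (fun _ : ℕ => ℝ) ⊤) (l : ℝ),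
      Tendsto (fun n => x n) atTop (𝓝 l) → Λ x = l) ∧
  (∀ x : lp (fun _ : ℕ => ℝ) ⊤, (∀ n, 0 ≤ x n) → 0 ≤ Λ x) ∧
  (∀ x y : lp (fun _ : ℕ => ℝ) ⊤, (∀ n, y n = x (n + 1)) → Λ y = Λ x)

noncomputable section BL

/-- The n-th standard basis vector in ℓ¹. -/
def e1 (n : ℕ) : lp (fun _ : ℕ => ℝ) 1 := lp.single 1 n 1

lemma e1_apply (n k : ℕ) : (e1 n) k = if k = n then 1 else 0 := by
  rcases eq_or_ne k n with h | h
  · subst h; simp [e1, lp.single_apply_self]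
  · simp [e1, lp.single_apply_ne _ _ _ h, h]

lemma memF : Memℓp (fun n : ℕ => e1 n) (⊤ : ENNReal) := by
  apply memℓp_infty
  refine ⟨1, ?_⟩
  rintro x ⟨n, rfl⟩
  show ‖e1 n‖ ≤ 1
  unfold e1
  rw [lp.norm_single (E := fun _ : ℕ => ℝ) (by norm_num : (0:ENNReal) < 1) n (1:ℝ)]
  simp

def F : lp (fun _ : ℕ => lp (fun _ : ℕ => ℝ) 1) ⊤ := ⟨fun n => e1 n, memF⟩

def eInf (j : ℕ) : lp (fun _ : ℕ => ℝ) ⊤ :=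
  ⟨fun k => if k = j then 1 else 0, by
    apply memℓp_infty
    refine ⟨1, ?_⟩
    rintro x ⟨n, rfl⟩
    dsimp; split <;> simp⟩

def oneInf : lp (fun _ : ℕ => ℝ) ⊤ :=
  ⟨fun _ => 1, by
    apply memℓp_infty
    refine ⟨1, ?_⟩
    rintro x ⟨n, rfl⟩
    simp⟩

lemma key_tsum (j : ℕ) (v : ℕ → ℝ) : ∑' k : ℕ, eInf j k * v k = v j := by
  have : (fun k : ℕ => eInf j k * v k) = fun k : ℕ => if k = j then v j else 0 := by
    funext k
    show (if k = j then (1:ℝ) else 0) * v k = _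
    by_cases hk : k = j
    · subst hk; simp
    · simp [hk]
  rw [this, tsum_ite_eq]

theorem banach_limit_no_ell1_extension (T : lp (fun _ : ℕ => ℝ) ⊤ →L[ℝ] ℝ)
    (hT : IsBanachLimit T) :
    ¬ ∃ TY : lp (fun _ : ℕ => lp (fun _ : ℕ => ℝ) 1) ⊤ →L[ℝ] lp (fun _ : ℕ => ℝ) 1,
      ∀ (f : lp (fun _ : ℕ => lp (fun _ : ℕ => ℝ) 1) ⊤)
        (y : lp (fun _ : ℕ => ℝ) ⊤) (g : lp (fun _ : ℕ => ℝ) ⊤),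
        (∀ n : ℕ, g n = ∑' k : ℕ, y k * (f n) k) →
        ∑' k : ℕ, y k * (TY f) k = T g := by
  rintro ⟨TY, h⟩
  obtain ⟨hlim, -, -⟩ := hT
  -- coordinates of TY F are zero
  have hcoord : ∀ j : ℕ, (TY F) j = 0 := by
    intro j
    have h1 : ∑' k : ℕ, eInf j k * (TY F) k = T (eInf j) := by
      apply h
      intro n
      rw [key_tsum]
      show (if n = j then (1:ℝ) else 0) = e1 n j
      rw [e1_apply]
      by_cases hnj : n = j
      · subst hnj; simp
      · rw [if_neg hnj, if_neg (fun h => hnj h.symm)]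
    have h2 : T (eInf j) = 0 := by
      apply hlim
      apply Tendsto.congr' (f₁ := fun _ => (0 : ℝ))
      · filter_upwards [eventually_ge_atTop (j + 1)] with n hn
        show (0:ℝ) = if n = j then 1 else 0
        rw [if_neg (by omega)]
      · exact tendsto_const_nhds
    rw [key_tsum] at h1
    rw [h1, h2]
  -- y = 1 gives contradiction
  have h1 : ∑' k : ℕ, oneInf k * (TY F) k = T oneInf := by
    apply h
    intro n
    show (1:ℝ) = ∑' k : ℕ, oneInf k * (F n) k
    have : (fun k : ℕ => oneInf k * (F n) k) = fun k : ℕ => if k = n then (1:ℝ) else 0 := by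
      funext k
      show (1:ℝ) * (F n) k = _
      rw [one_mul]
      exact e1_apply n k
    rw [this, tsum_ite_eq]
  have hT1 : T oneInf = 1 := hlim _ 1 tendsto_const_nhds
  have hz : (fun k : ℕ => oneInf k * (TY F) k) = fun _ => (0:ℝ) := by
    funext k
    show (1:ℝ) * (TY F) k = 0
    rw [hcoord k, mul_zero]
  rw [hT1, hz] at h1
  simp at h1

end BL
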